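/- Let Ψ₀ = [[1,0],[0,0]], σ_x = [[0,1],[1,0]] and σ_z = [[1,0],[0,-1]] in M_2. There is no completely positive linear map T̃ : M_2 → M_2 with T̃(Ψ₀) = Ψ₀ and T̃(σ_x) = σ_z; in fact, there is not even a positive linear map T̃ : M_2 → M_2 (i.e., mapping positive semidefinite matrices to positive semidefinite matrices) satisfying these two conditions. -/

import Mathlib

open scoped Kronecker ComplexOrder Matrix.Norms.L2Operator
open Matrix Filter Classical

/-- `M_d`, the algebra of `d × d` complex matrices. -/
abbrev Mat (d : ℕ) := Matrix (Fin d) (Fin d) ℂ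

/-- A linear map `T : S → M_{d'}` on a subspace `S ⊆ M_d` is completely positive if for
every `n` and every positive semidefinite `P = Σ_j X_j ⊗ K_j` with `X_j ∈ S`, `K_j ∈ M_n`,
the matrix `(T ⊗ id_n)(P) = Σ_j T(X_j) ⊗ K_j` is positive semidefinite. -/
def IsCPOn {d d' : ℕ} (S : Submodule ℂ (Mat d)) (T : S →ₗ[ℂ] Mat d') : Prop :=
  ∀ (n m : ℕ) (X : Fin m → S) (K : Fin m → Matrix (Fin n) (Fin n) ℂ),
    (∑ j, (X j : Mat d) ⊗ₖ K j).PosSemidef →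
    (∑ j, (T (X j)) ⊗ₖ K j).PosSemidef

/-- Complete positivity for a linear map defined on all of `M_d`. -/
def IsCP {d d' : ℕ} (T : Mat d →ₗ[ℂ] Mat d') : Prop :=
  ∀ (n m : ℕ) (X : Fin m → Mat d) (K : Fin m → Matrix (Fin n) (Fin n) ℂ),
    (∑ j, X j ⊗ₖ K j).PosSemidef →
    (∑ j, T (X j) ⊗ₖ K j).PosSemidef

def matPsi0 : Mat 2 := !![1, 0; 0, 0]
def pauliX : Mat 2 := !![0, 1; 1, 0]
def pauliY : Mat 2 := !![0, -Complex.I; Complex.I, 0]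
def pauliZ : Mat 2 := !![1, 0; 0, -1]

set_option maxHeartbeats 1000000 in
lemma smul_real_psd {n : ℕ} {M : Matrix (Fin n) (Fin n) ℂ} (hM : M.PosSemidef)
    {c : ℝ} (hc : 0 ≤ c) : ((c : ℂ) • M).PosSemidef := by
  refine PosSemidef.of_dotProduct_mulVec_nonneg ?_ ?_
  · unfold Matrix.IsHermitian
    rw [conjTranspose_smul, hM.1.eq]
    simp
  · intro x
    have h := hM.dotProduct_mulVec_nonneg x
    have he : star x ⬝ᵥ ((c : ℂ) • M) *ᵥ x = (c : ℂ) * (star x ⬝ᵥ M *ᵥ x) := by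
      rw [smul_mulVec, dotProduct_smul, smul_eq_mul]
    rw [he, Complex.le_def] at *
    obtain ⟨h1, h2⟩ := h
    simp only [Complex.zero_re, Complex.zero_im] at *
    constructor
    · simp [Complex.mul_re, ← h2]
      positivity
    · simp [Complex.mul_im, ← h2]

lemma diag11_nonneg {M : Mat 2} (hM : M.PosSemidef) : 0 ≤ M 1 1 := by
  have := hM.dotProduct_mulVec_nonneg ![0, 1]
  simpa [dotProduct, mulVec, Fin.sum_univ_two] using this

lemma no_pos_map : ¬ ∃ T : Mat 2 →ₗ[ℂ] Mat 2,
    (∀ A : Mat 2, A.PosSemidef → (T A).PosSemidef) ∧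
    T matPsi0 = matPsi0 ∧ T pauliX = pauliZ := by
  rintro ⟨T, hpos, h0, hx⟩
  have hB : (T 1).PosSemidef := hpos 1 Matrix.PosSemidef.one
  set B := T 1 with hBdef
  obtain ⟨hb0, hbim⟩ : 0 ≤ (B 1 1).re ∧ (B 1 1).im = 0 := by
    have := diag11_nonneg hB
    rw [Complex.le_def] at this
    exact ⟨by simpa using this.1, by simpa using this.2.symm⟩
  set b : ℝ := (B 1 1).re with hbdef
  set t : ℝ := 1 / (b + 1) with htdef
  have ht0 : 0 < t := by positivity
  have hden : (0:ℝ) < 1 + t ^ 2 := by positivity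
  set M : Mat 2 := (((1 + t ^ 2)⁻¹ : ℝ) : ℂ) • !![1, (t:ℂ); (t:ℂ), (t:ℂ)^2] with hMdef
  have hw : (!![1, (t:ℂ); (t:ℂ), (t:ℂ)^2] : Mat 2)
      = (!![1, (t:ℂ)] : Matrix (Fin 1) (Fin 2) ℂ)ᴴ * !![1, (t:ℂ)] := by
    ext i j
    fin_cases i <;> fin_cases j <;>
      simp [Matrix.mul_apply, Complex.conj_ofReal] <;> ring
  have hMpsd : M.PosSemidef := by
    rw [hMdef, hw]
    exact smul_real_psd (posSemidef_conjTranspose_mul_self _) (by positivity)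
  have hcombo : M = (((t^2/(1+t^2) : ℝ)) : ℂ) • (1 : Mat 2)
      + (((1-t^2)/(1+t^2) : ℝ) : ℂ) • matPsi0 + ((t/(1+t^2) : ℝ) : ℂ) • pauliX := by
    ext i j
    fin_cases i <;> fin_cases j <;>
      simp [hMdef, matPsi0, pauliX, Matrix.one_apply] <;>
      (try push_cast) <;> (try field_simp) <;> (try ring)
  have hTM : (T M).PosSemidef := hpos M hMpsd
  have hTMval : T M = (((t^2/(1+t^2) : ℝ)) : ℂ) • B
      + (((1-t^2)/(1+t^2) : ℝ) : ℂ) • matPsi0 + ((t/(1+t^2) : ℝ) : ℂ) • pauliZ := by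
    rw [hcombo]
    simp [map_add, _root_.map_smul, h0, hx, hBdef]
  have hdiag := diag11_nonneg hTM
  rw [hTMval] at hdiag
  have hval : ((((t^2/(1+t^2) : ℝ)) : ℂ) • B
      + (((1-t^2)/(1+t^2) : ℝ) : ℂ) • matPsi0 + ((t/(1+t^2) : ℝ) : ℂ) • pauliZ) 1 1
      = (((t^2/(1+t^2) : ℝ)) : ℂ) * B 1 1 - ((t/(1+t^2) : ℝ) : ℂ) := by
    simp [matPsi0, pauliZ]
    ring
  rw [hval, Complex.le_def] at hdiag
  set a1 : ℝ := t^2/(1+t^2) with ha1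
  set a2 : ℝ := t/(1+t^2) with ha2
  have hre : 0 ≤ a1 * b - a2 := by
    have := hdiag.1
    simpa [Complex.sub_re, Complex.mul_re, Complex.ofReal_re, Complex.ofReal_im, hbim,
      ← hbdef] using this
  have h1 : 0 ≤ t^2 * b - t := by
    have := mul_nonneg hre (le_of_lt hden)
    calc (0:ℝ) ≤ (a1 * b - a2) * (1+t^2) := this
    _ = t^2 * b - t := by rw [ha1, ha2]; field_simp
  have : t * b ≥ 1 := by nlinarith
  rw [htdef] at this
  have hb1 : (0:ℝ) < b + 1 := by linarith
  rw [ge_iff_le, div_mul_eq_mul_div, le_div_iff₀ hb1] at this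
  linarith

lemma kron_one_eq {d : ℕ} (M : Mat d) :
    M ⊗ₖ (1 : Matrix (Fin 1) (Fin 1) ℂ)
      = M.submatrix (Equiv.prodUnique (Fin d) (Fin 1)) (Equiv.prodUnique (Fin d) (Fin 1)) := by
  ext ⟨i, j⟩ ⟨k, l⟩
  simp [Matrix.one_apply, Subsingleton.elim j l]

lemma kron_one_psd_iff {d : ℕ} (M : Mat d) :
    (M ⊗ₖ (1 : Matrix (Fin 1) (Fin 1) ℂ)).PosSemidef ↔ M.PosSemidef := by
  rw [kron_one_eq]
  exact posSemidef_submatrix_equiv _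

lemma isCP_pos {d d' : ℕ} {T : Mat d →ₗ[ℂ] Mat d'} (hT : IsCP T) :
    ∀ A : Mat d, A.PosSemidef → (T A).PosSemidef := by
  intro A hA
  have h := hT 1 1 ![A] ![1] (by
    rw [Fin.sum_univ_one]
    simpa [kron_one_psd_iff] using hA)
  rw [Fin.sum_univ_one] at h
  simpa [kron_one_psd_iff] using h

/-- There is no completely positive — indeed not even a positive — linear map on `M_2`
with `Ψ₀ ↦ Ψ₀` and `σ_x ↦ σ_z`. -/
theorem stmt10 :
    (¬ ∃ T : Mat 2 →ₗ[ℂ] Mat 2, IsCP T ∧ T matPsi0 = matPsi0 ∧ T pauliX = pauliZ) ∧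
    (¬ ∃ T : Mat 2 →ₗ[ℂ] Mat 2, (∀ A : Mat 2, A.PosSemidef → (T A).PosSemidef) ∧
        T matPsi0 = matPsi0 ∧ T pauliX = pauliZ) := by
  refine ⟨?_, no_pos_map⟩
  rintro ⟨T, hCP, h0, hx⟩
  exact no_pos_map ⟨T, isCP_pos hCP, h0, hx⟩
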